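/- Let f be submodular with f(∅)=0, x ∈ B(f), and i, j ∈ V distinct. There exists ε > 0 with x + ε(χ_i − χ_j) ∈ B(f) if and only if j ∈ dep(x,i)∖{i}, where dep(x,i) is the unique minimal minimizer of min{f(X) − x(X) : i ∈ X ⊆ V}. Equivalently, j ∉ dep(x,i) iff there is a set X with i ∈ X, j ∉ X and x(X) = f(X). -/
import Mathlib


attribute [local instance] Classical.propDecidable

/-- `X` is a minimizer of `min { f(Y) - x(Y) : i ∈ Y ⊆ V }`. -/
def IsMinimizerAt {V : Type*} [Fintype V] [DecidableEq V]
    (f : Finset V → ℝ) (x : V → ℝ) (i : V) (X : Finset V) : Prop :=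
  i ∈ X ∧ ∀ Y : Finset V, i ∈ Y →
    f X - ∑ k ∈ X, x k ≤ f Y - ∑ k ∈ Y, x k

/-- `dep(x, i)`: the intersection of all minimizers of
`min { f(Y) - x(Y) : i ∈ Y ⊆ V }`. -/
noncomputable def dep {V : Type*} [Fintype V] [DecidableEq V]
    (f : Finset V → ℝ) (x : V → ℝ) (i : V) : Finset V :=
  Finset.univ.filter fun v => ∀ X : Finset V, IsMinimizerAt f x i X → v ∈ X

/-- For distinct `i, j` and `x` in the base polyhedron `B(f)`, there is `ε > 0`
with `x + ε (χ_i - χ_j) ∈ B(f)` iff `j ∈ dep(x, i) \ {i}`; equivalently,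
`j ∉ dep(x, i)` iff there is a tight set `X` (`x(X) = f(X)`) with `i ∈ X`,
`j ∉ X`. -/
theorem exchange_iff_mem_dep {V : Type*} [Fintype V] [DecidableEq V]
    (f : Finset V → ℝ) (h0 : f ∅ = 0)
    (hsub : ∀ X Y : Finset V, f (X ∪ Y) + f (X ∩ Y) ≤ f X + f Y)
    (x : V → ℝ)
    (hx : (∀ X : Finset V, ∑ k ∈ X, x k ≤ f X) ∧ ∑ k, x k = f Finset.univ)
    (i j : V) (hij : i ≠ j) :
    ((∃ ε : ℝ, 0 < ε ∧
        (∀ X : Finset V,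
          ∑ k ∈ X, (x k + ε * ((if k = i then 1 else 0) - (if k = j then 1 else 0))) ≤ f X) ∧
        ∑ k, (x k + ε * ((if k = i then 1 else 0) - (if k = j then 1 else 0))) = f Finset.univ)
      ↔ j ∈ dep f x i \ {i}) ∧
    (j ∉ dep f x i ↔
      ∃ X : Finset V, i ∈ X ∧ j ∉ X ∧ ∑ k ∈ X, x k = f X) := by
  obtain ⟨hle, heq⟩ := hx
  -- minimizers are exactly tight sets containing i
  have key : ∀ X : Finset V, i ∈ X → (IsMinimizerAt f x i X ↔ ∑ k ∈ X, x k = f X) := by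
    intro X hiX
    constructor
    · intro hmin
      have h1 := hmin.2 Finset.univ (Finset.mem_univ i)
      have h2 := hle X
      linarith
    · intro ht
      refine ⟨hiX, fun Y _ => ?_⟩
      have := hle Y
      linarith
  have hdep : j ∉ dep f x i ↔
      ∃ X : Finset V, i ∈ X ∧ j ∉ X ∧ ∑ k ∈ X, x k = f X := by
    simp only [dep, Finset.mem_filter, Finset.mem_univ, true_and, not_forall,
      Classical.not_imp]
    constructor
    · rintro ⟨X, hmin, hjX⟩
      exact ⟨X, hmin.1, hjX, (key X hmin.1).1 hmin⟩
    · rintro ⟨X, hiX, hjX, ht⟩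
      exact ⟨X, (key X hiX).2 ht, hjX⟩
  -- rewrite the perturbed sum
  have sumlem : ∀ (ε : ℝ) (X : Finset V),
      ∑ k ∈ X, (x k + ε * ((if k = i then 1 else 0) - (if k = j then 1 else 0)))
        = ∑ k ∈ X, x k
          + ε * ((if i ∈ X then (1:ℝ) else 0) - (if j ∈ X then (1:ℝ) else 0)) := by
    intro ε X
    rw [Finset.sum_add_distrib]
    congr 1
    rw [← Finset.mul_sum, Finset.sum_sub_distrib,
      Finset.sum_ite_eq' X i (fun _ => (1:ℝ)), Finset.sum_ite_eq' X j (fun _ => (1:ℝ))]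
  refine ⟨?_, hdep⟩
  constructor
  · rintro ⟨ε, hε, hfeas, -⟩
    rw [Finset.mem_sdiff]
    refine ⟨?_, fun hj => hij (Finset.mem_singleton.mp hj).symm⟩
    by_contra hjdep
    obtain ⟨X, hiX, hjX, ht⟩ := hdep.mp hjdep
    have := hfeas X
    rw [sumlem, if_pos hiX, if_neg hjX] at this
    linarith
  · intro hj
    rw [Finset.mem_sdiff] at hj
    have hjdep := hj.1
    have hstrict : ∀ X : Finset V, i ∈ X → j ∉ X → ∑ k ∈ X, x k < f X := by
      intro X hiX hjX
      rcases lt_or_eq_of_le (hle X) with h | h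
      · exact h
      · exact absurd (hdep.mpr ⟨X, hiX, hjX, h⟩) (by simpa using hjdep)
    set S : Finset (Finset V) := Finset.univ.filter (fun X => i ∈ X ∧ j ∉ X) with hS
    have hSne : S.Nonempty := ⟨{i}, by simp [hS, Ne.symm hij]⟩
    set ε : ℝ := S.inf' hSne (fun X => f X - ∑ k ∈ X, x k) with hεdef
    have hεpos : 0 < ε := by
      rw [hεdef]
      apply Finset.lt_inf'_iff hSne (f := fun X => f X - ∑ k ∈ X, x k) (a := 0) |>.mpr
      intro X hX
      rw [hS, Finset.mem_filter] at hX
      have := hstrict X hX.2.1 hX.2.2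
      linarith
    refine ⟨ε, hεpos, fun X => ?_, ?_⟩
    · rw [sumlem]
      by_cases hiX : i ∈ X <;> by_cases hjX : j ∈ X <;>
        simp only [if_pos, if_neg, hiX, hjX, if_true, if_false]
      · have := hle X; linarith
      · have hXS : X ∈ S := by rw [hS, Finset.mem_filter]; exact ⟨Finset.mem_univ X, hiX, hjX⟩
        have := Finset.inf'_le (fun X => f X - ∑ k ∈ X, x k) hXS
        rw [← hεdef] at this
        linarith
      · have := hle X; nlinarith
      · have := hle X; linarith
    · rw [sumlem, if_pos (Finset.mem_univ i), if_pos (Finset.mem_univ j)]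
      simpa using heq
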